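/- In the lossy counting algorithm, every item whose true frequency exceeds εN is guaranteed to have a tuple present in the data structure after processing N elements. -/

import Mathlib

/-!  Manku–Motwani lossy counting: stream processed in epochs of length `L = ⌈1/ε⌉`.
A tuple `(f, Δ)` is kept per item; on arrival of `e` in epoch `t` we increment `f`
or insert `(1, t-1)`; at the end of each epoch `t` we delete tuples with `f + Δ ≤ t`. -/

variable {α : Type*} [DecidableEq α]

/-- Insert/increment step: item `e` arrives in epoch `t`. -/
def lcInsert (σ : α → Option (ℕ × ℕ)) (t : ℕ) (e : α) : α → Option (ℕ × ℕ) :=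
  fun x =>
    if x = e then
      match σ e with
      | some (f, Δ) => some (f + 1, Δ)
      | none => some (1, t - 1)
    else σ x

/-- End-of-epoch deletion: remove all tuples with `f + Δ ≤ t`. -/
def lcDelete (σ : α → Option (ℕ × ℕ)) (t : ℕ) : α → Option (ℕ × ℕ) :=
  fun x =>
    match σ x with
    | some (f, Δ) => if f + Δ ≤ t then none else some (f, Δ)
    | none => none

/-- State of the lossy counting structure after processing the remaining stream,
having already processed `n` elements. The current element is element `n+1`,
belonging to epoch `⌈(n+1)/L⌉`; deletion happens at the end of each epoch. -/
def lcAux (L : ℕ) : List α → ℕ → (α → Option (ℕ × ℕ)) → (α → Option (ℕ × ℕ))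
  | [], _, σ => σ
  | e :: rest, n, σ =>
    let n' := n + 1
    let t := (n' + L - 1) / L
    let σ' := lcInsert σ t e
    lcAux L rest n' (if n' % L = 0 then lcDelete σ' t else σ')

/-- State after processing the whole stream `s`. -/
def lcState (L : ℕ) (s : List α) : α → Option (ℕ × ℕ) :=
  lcAux L s 0 fun _ => none

/-- **Lossy counting completeness**: every item whose true frequency exceeds `ε N`
still has a tuple in the data structure after the `N = s.length` stream elements. -/
private lemma epoch_eq (L n : ℕ) (hL : 0 < L) : (n + 1 + L - 1) / L = n / L + 1 := by
  have h : n + 1 + L - 1 = n + L := by omega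
  rw [h, Nat.add_div_right n hL]

private lemma epoch_del (L n : ℕ) (hL : 0 < L) (hm : (n + 1) % L = 0) :
    n / L + 1 = (n + 1) / L := by
  obtain ⟨k, hk⟩ := Nat.dvd_of_mod_eq_zero hm
  match k, hk with
  | 0, hk => omega
  | k + 1, hk =>
    have hk' : n + 1 = L * k + L := by rw [hk]; ring
    have hn : n = L - 1 + L * k := by omega
    have h1 : n / L = k := by
      rw [hn, Nat.add_mul_div_left _ _ hL, Nat.div_eq_of_lt (by omega)]
      omega
    have h2 : (n + 1) / L = k + 1 := by
      rw [hk, Nat.mul_div_cancel_left _ hL]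
    omega

/-- Invariant is preserved by the optional end-of-epoch deletion. -/
private lemma delete_inv (t q q2 c' : ℕ) (P : Prop) [Decidable P] (e : α)
    (σ' : α → Option (ℕ × ℕ))
    (key1 : ∀ f Δ, σ' e = some (f, Δ) → c' ≤ f + Δ)
    (key0 : σ' e = none → c' ≤ q)
    (hqq : q ≤ q2)
    (htq : P → t ≤ q2) :
    (∀ f Δ, (if P then lcDelete σ' t else σ') e = some (f, Δ) → c' ≤ f + Δ) ∧
    ((if P then lcDelete σ' t else σ') e = none → c' ≤ q2) := by
  split_ifs with hP
  · constructor
    · intro f Δ hfd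
      simp only [lcDelete] at hfd
      cases hσe : σ' e with
      | none => rw [hσe] at hfd; simp at hfd
      | some p =>
        obtain ⟨f₀, Δ₀⟩ := p
        rw [hσe] at hfd
        by_cases hle : f₀ + Δ₀ ≤ t
        · simp [hle] at hfd
        · simp [hle] at hfd
          obtain ⟨rfl, rfl⟩ := hfd
          exact key1 _ _ hσe
    · intro hnone
      simp only [lcDelete] at hnone
      cases hσe : σ' e with
      | none => have := key0 hσe; omega
      | some p =>
        obtain ⟨f₀, Δ₀⟩ := p
        rw [hσe] at hnone
        by_cases hle : f₀ + Δ₀ ≤ t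
        · have := key1 f₀ Δ₀ hσe
          have := htq hP
          omega
        · simp [hle] at hnone
  · constructor
    · exact key1
    · intro hnone
      have := key0 hnone
      omega

private lemma lcAux_key (L : ℕ) (hL : 0 < L) (e : α) :
    ∀ (s : List α) (n c : ℕ) (σ : α → Option (ℕ × ℕ)),
    (∀ f Δ, σ e = some (f, Δ) → c ≤ f + Δ) →
    (σ e = none → c ≤ n / L) →
    (lcAux L s n σ e = none → c + s.count e ≤ (n + s.length) / L) ∧
    (∀ f Δ, lcAux L s n σ e = some (f, Δ) → c + s.count e ≤ f + Δ) := by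
  intro s
  induction s with
  | nil =>
    intro n c σ h1 h2
    simpa [lcAux] using ⟨h2, h1⟩
  | cons e' rest ih =>
    intro n c σ h1 h2
    simp only [lcAux]
    rw [epoch_eq L n hL]
    have hmono : n / L ≤ (n + 1) / L := Nat.div_le_div_right (Nat.le_succ n)
    have htq : (n + 1) % L = 0 → n / L + 1 ≤ (n + 1) / L := by
      intro hm
      rw [epoch_del L n hL hm]
    -- the increment to the count from this element
    rcases eq_or_ne e' e with he | he
    · subst he
      -- the arriving element is `e`
      have key1 : ∀ f Δ, lcInsert σ (n / L + 1) e' e' = some (f, Δ) → c + 1 ≤ f + Δ := by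
        intro f Δ hfd
        simp only [lcInsert, if_pos rfl] at hfd
        cases hσe : σ e' with
        | none =>
          rw [hσe] at hfd
          simp at hfd
          have := h2 hσe
          omega
        | some p =>
          obtain ⟨f₀, Δ₀⟩ := p
          rw [hσe] at hfd
          simp at hfd
          have := h1 f₀ Δ₀ hσe
          omega
      have key0 : lcInsert σ (n / L + 1) e' e' = none → c + 1 ≤ n / L := by
        intro hnone
        simp only [lcInsert, if_pos rfl] at hnone
        cases hσe : σ e' <;> rw [hσe] at hnone <;> simp at hnone
      obtain ⟨h1', h2'⟩ := delete_inv (n / L + 1) (n / L) ((n + 1) / L) (c + 1)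
        ((n + 1) % L = 0) e' (lcInsert σ (n / L + 1) e') key1 key0 hmono htq
      obtain ⟨ha, hb⟩ := ih (n + 1) (c + 1) _ h1' h2'
      have hcount : (e' :: rest).count e' = rest.count e' + 1 := List.count_cons_self
      have hlen : n + (e' :: rest).length = n + 1 + rest.length := by
        simp [List.length_cons]; omega
      rw [hcount, hlen]
      exact ⟨fun hn => by have := ha hn; omega, fun f Δ hfd => by have := hb f Δ hfd; omega⟩
    · -- the arriving element is not `e`
      have hins : lcInsert σ (n / L + 1) e' e = σ e := by
        simp [lcInsert, he.symm]
      have key1 : ∀ f Δ, lcInsert σ (n / L + 1) e' e = some (f, Δ) → c ≤ f + Δ := by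
        intro f Δ hfd; rw [hins] at hfd; exact h1 f Δ hfd
      have key0 : lcInsert σ (n / L + 1) e' e = none → c ≤ n / L := by
        intro hnone; rw [hins] at hnone; exact h2 hnone
      obtain ⟨h1', h2'⟩ := delete_inv (n / L + 1) (n / L) ((n + 1) / L) c
        ((n + 1) % L = 0) e (lcInsert σ (n / L + 1) e') key1 key0 hmono htq
      obtain ⟨ha, hb⟩ := ih (n + 1) c _ h1' h2'
      have hcount : (e' :: rest).count e = rest.count e := List.count_cons_of_ne he
      have hlen : n + (e' :: rest).length = n + 1 + rest.length := by
        simp [List.length_cons]; omega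
      rw [hcount, hlen]
      exact ⟨ha, hb⟩

theorem lossy_counting_completeness (ε : ℝ) (hε : 0 < ε) (hε1 : ε ≤ 1)
    (s : List α) (e : α)
    (hc : ε * s.length < (s.count e : ℝ)) :
    (lcState ⌈1 / ε⌉₊ s e).isSome := by
  set L := ⌈1 / ε⌉₊ with hLdef
  have hL : 0 < L := Nat.ceil_pos.mpr (by positivity)
  by_contra hnone
  rw [Option.not_isSome_iff_eq_none] at hnone
  have key := (lcAux_key L hL e s 0 0 (fun _ => none) (by simp) (by simp)).1
  have hcount : s.count e ≤ (0 + s.length) / L := by simpa using key hnone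
  simp only [Nat.zero_add] at hcount
  have hLe : (1 : ℝ) / ε ≤ L := Nat.le_ceil _
  have hL0 : (0 : ℝ) < L := by exact_mod_cast hL
  have h1 : (1 : ℝ) ≤ ε * L := by
    rw [div_le_iff₀ hε] at hLe
    linarith
  have h2 : ((s.length / L : ℕ) : ℝ) ≤ (s.length : ℝ) / L := Nat.cast_div_le
  have h3 : (s.length : ℝ) / L ≤ ε * s.length := by
    rw [div_le_iff₀ hL0]
    nlinarith [Nat.cast_nonneg (α := ℝ) s.length]
  have h4 : ((s.count e : ℕ) : ℝ) ≤ ((s.length / L : ℕ) : ℝ) := by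
    exact_mod_cast hcount
  linarith
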